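/- Let α > 0 and define the half-Cauchy hazard function h₀(x) = α / ((1 + (αx)²)·(π/2 − arctan(αx))) for x > 0, and for τ > 0 define r(x,τ) = τ·h₀(τx)/h₀(x). Then for τ > 0: (0 ≤ r(x,τ) ≤ 1 for all x > 0) if and only if τ ≤ 1. -/

import Mathlib

/-- The half-Cauchy hazard function `h₀(x) = α/((1+(αx)²)(π/2 − arctan(αx)))`. -/
noncomputable def halfCauchyHazard (α x : ℝ) : ℝ :=
  α / ((1 + (α * x) ^ 2) * (Real.pi / 2 - Real.arctan (α * x)))

noncomputable def gHC (u : ℝ) : ℝ :=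
  u / ((1 + u ^ 2) * (Real.pi / 2 - Real.arctan u))

lemma A_pos (u : ℝ) : 0 < Real.pi / 2 - Real.arctan u :=
  sub_pos.mpr (Real.arctan_lt_pi_div_two u)

lemma den_pos (u : ℝ) : 0 < (1 + u ^ 2) * (Real.pi / 2 - Real.arctan u) :=
  mul_pos (by positivity) (A_pos u)

lemma gHC_pos {u : ℝ} (hu : 0 < u) : 0 < gHC u :=
  div_pos hu (den_pos u)

lemma arctan_lt_self' {y : ℝ} (hy : 0 < y) : Real.arctan y < y := by
  have h0 : 0 < Real.arctan y := by
    have := Real.arctan_strictMono hy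
    simpa [Real.arctan_zero] using this
  have h2 := Real.lt_tan h0 (Real.arctan_lt_pi_div_two y)
  rwa [Real.tan_arctan] at h2

lemma hasDerivAt_gHC (u : ℝ) :
    HasDerivAt gHC
      (((1 - u ^ 2) * (Real.pi / 2 - Real.arctan u) + u) /
        ((1 + u ^ 2) * (Real.pi / 2 - Real.arctan u)) ^ 2) u := by
  have hA : HasDerivAt (fun u : ℝ => Real.pi / 2 - Real.arctan u)
      (-(1 / (1 + u ^ 2))) u := (Real.hasDerivAt_arctan u).const_sub _
  have h1 : HasDerivAt (fun u : ℝ => 1 + u ^ 2) (2 * u) u := by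
    have := (hasDerivAt_pow 2 u).const_add 1
    simpa using this
  have hD := h1.mul hA
  have hDne : (1 + u ^ 2) * (Real.pi / 2 - Real.arctan u) ≠ 0 := (den_pos u).ne'
  have hg : HasDerivAt gHC _ u := (hasDerivAt_id u).div hD hDne
  convert hg using 2
  have h2 : (1 : ℝ) + u ^ 2 ≠ 0 := by positivity
  simp only [id_eq]
  field_simp
  ring

lemma deriv_gHC_pos {u : ℝ} (hu : 0 < u) : 0 < deriv gHC u := by
  rw [(hasDerivAt_gHC u).deriv]
  apply div_pos _ (pow_pos (den_pos u) 2)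
  rcases le_or_gt u 1 with h | h
  · have h1 : 0 ≤ (1 - u ^ 2) := by nlinarith
    nlinarith [A_pos u, mul_nonneg h1 (A_pos u).le]
  · have harc : Real.pi / 2 - Real.arctan u = Real.arctan u⁻¹ := by
      rw [Real.arctan_inv_of_pos hu]
    have hlt : Real.arctan u⁻¹ < u⁻¹ := arctan_lt_self' (by positivity)
    rw [harc]
    have h1 : (1 - u ^ 2) < 0 := by nlinarith
    have hmul : (1 - u ^ 2) * u⁻¹ < (1 - u ^ 2) * Real.arctan u⁻¹ :=
      (mul_lt_mul_left_of_neg h1).mpr hlt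
    have key : (1 - u ^ 2) * u⁻¹ + u = u⁻¹ := by field_simp; ring
    nlinarith [inv_pos.mpr hu]

lemma gHC_strictMonoOn : StrictMonoOn gHC (Set.Ici (0:ℝ)) := by
  apply strictMonoOn_of_deriv_pos (convex_Ici 0)
  · apply Continuous.continuousOn
    exact continuous_id.div
      (((continuous_const.add (continuous_pow 2)).mul
        (continuous_const.sub Real.continuous_arctan)))
      (fun u => (den_pos u).ne')
  · intro u hu
    rw [interior_Ici] at hu
    exact deriv_gHC_pos hu

lemma hazard_eq (α : ℝ) {x : ℝ} (hx : x ≠ 0) :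
    halfCauchyHazard α x = gHC (α * x) / x := by
  unfold halfCauchyHazard gHC
  rw [div_div, mul_div_mul_right _ _ hx]

/-- For the half-Cauchy hazard with rate `α > 0` and `τ > 0`:
`0 ≤ r(x,τ) ≤ 1` for all `x > 0` (with `r(x,τ) = τ·h₀(τx)/h₀(x)`)
if and only if `τ ≤ 1`. -/
theorem halfCauchy_r_le_one_iff (α τ : ℝ) (hα : 0 < α) (hτ : 0 < τ) :
    (∀ x > (0:ℝ),
        0 ≤ τ * halfCauchyHazard α (τ * x) / halfCauchyHazard α x ∧
        τ * halfCauchyHazard α (τ * x) / halfCauchyHazard α x ≤ 1) ↔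
      τ ≤ 1 := by
  have hratio : ∀ x > (0:ℝ),
      τ * halfCauchyHazard α (τ * x) / halfCauchyHazard α x
        = gHC (α * (τ * x)) / gHC (α * x) := by
    intro x hx
    rw [hazard_eq α (by positivity : τ * x ≠ 0), hazard_eq α hx.ne']
    have hb : gHC (α * x) ≠ 0 := (gHC_pos (by positivity)).ne'
    generalize gHC (α * (τ * x)) = a
    generalize hB : gHC (α * x) = b at hb ⊢
    field_simp
  constructor
  · intro H
    by_contra h
    push_neg at h
    have h1 := (H (1/α) (by positivity)).2
    rw [hratio _ (by positivity)] at h1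
    have e1 : α * (τ * (1/α)) = τ := by field_simp
    have e2 : α * (1/α) = 1 := by field_simp
    rw [e1, e2] at h1
    have hg1 : (0:ℝ) < gHC 1 := gHC_pos one_pos
    have hle : gHC τ ≤ gHC 1 := (div_le_one hg1).mp h1
    have hlt : gHC 1 < gHC τ :=
      gHC_strictMonoOn (Set.mem_Ici.mpr zero_le_one)
        (Set.mem_Ici.mpr (le_of_lt (lt_trans one_pos h))) h
    linarith
  · intro h x hx
    rw [hratio x hx]
    have hgx : 0 < gHC (α * x) := gHC_pos (by positivity)
    have hgtx : 0 < gHC (α * (τ * x)) := gHC_pos (by positivity)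
    refine ⟨by positivity, (div_le_one hgx).mpr ?_⟩
    have hle : α * (τ * x) ≤ α * x := by nlinarith [mul_pos hα hx]
    exact gHC_strictMonoOn.monotoneOn
      (Set.mem_Ici.mpr (by positivity)) (Set.mem_Ici.mpr (by positivity)) hle
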